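/- Let L > 0, P > 0 and R > 0, and set α = (e^R − 1)/P. Define W(x) = Q( √L (log(1+xP) − R) / √(1 − 1/(1+xP)²) ) for x > 0, where Q is the Gaussian Q-function. Then W(α) = 1/2, W is differentiable at α, and its derivative at α equals −√( L P² / (2π (e^{2R} − 1)) ). (This justifies the tangent-line value μ = √(LP²/(2π(e^{2R}−1))) used in the semi-linear approximation of the error probability.) -/

import Mathlib

open MeasureTheory Real

/-- The Gaussian Q-function Q(x) = (1/√(2π)) ∫_x^∞ e^{-t²/2} dt. -/
noncomputable def gaussQ (x : ℝ) : ℝ :=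
  (1 / Real.sqrt (2 * Real.pi)) * ∫ t in Set.Ioi x, Real.exp (-t ^ 2 / 2)

lemma gauss_integrable : Integrable (fun t : ℝ => Real.exp (-t ^ 2 / 2)) := by
  have : (fun t : ℝ => Real.exp (-t ^ 2 / 2)) = fun t => Real.exp (-(1/2) * t ^ 2) := by
    ext t; ring_nf
  rw [this]
  exact integrable_exp_neg_mul_sq (by norm_num)

lemma gaussQ_zero : gaussQ 0 = 1 / 2 := by
  have h : ∫ t in Set.Ioi (0:ℝ), Real.exp (-t ^ 2 / 2)
      = ∫ t in Set.Ioi (0:ℝ), Real.exp (-(1/2) * t ^ 2) := by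
    congr 1; ext t; ring_nf
  have hne : Real.sqrt (2 * π) ≠ 0 := by positivity
  rw [gaussQ, h, integral_gaussian_Ioi, show (π / (1/2:ℝ)) = 2*π by ring]
  field_simp

set_option maxHeartbeats 1000000 in
lemma gaussQ_eq (x : ℝ) : gaussQ x = gaussQ 0 -
    (1 / Real.sqrt (2 * Real.pi)) * ∫ t in (0:ℝ)..x, Real.exp (-t ^ 2 / 2) := by
  have hint := gauss_integrable
  have h1 : (∫ t in Set.Iic x, Real.exp (-t ^ 2 / 2)) - (∫ t in Set.Iic (0:ℝ), Real.exp (-t ^ 2 / 2))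
      = ∫ t in (0:ℝ)..x, Real.exp (-t ^ 2 / 2) :=
    intervalIntegral.integral_Iic_sub_Iic hint.integrableOn hint.integrableOn
  have h2 : ∀ a : ℝ, (∫ t in Set.Iic a, Real.exp (-t ^ 2 / 2))
      + ∫ t in Set.Ioi a, Real.exp (-t ^ 2 / 2) = ∫ t, Real.exp (-t ^ 2 / 2) := fun a =>
    intervalIntegral.integral_Iic_add_Ioi hint.integrableOn hint.integrableOn
  rw [gaussQ, gaussQ, ← h1]
  have e0 := h2 0
  have ex := h2 x
  have key : (∫ t in Set.Ioi x, Real.exp (-t ^ 2 / 2))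
      = (∫ t in Set.Ioi (0:ℝ), Real.exp (-t ^ 2 / 2))
        - ((∫ t in Set.Iic x, Real.exp (-t ^ 2 / 2))
          - ∫ t in Set.Iic (0:ℝ), Real.exp (-t ^ 2 / 2)) := by linarith
  rw [key]; ring

lemma gaussQ_hasDeriv : HasDerivAt gaussQ (-(1 / Real.sqrt (2 * Real.pi))) 0 := by
  have hc : Continuous (fun t : ℝ => Real.exp (-t ^ 2 / 2)) := by continuity
  have h : HasDerivAt (fun x => ∫ t in (0:ℝ)..x, Real.exp (-t ^ 2 / 2))
      (Real.exp (-(0:ℝ) ^ 2 / 2)) 0 :=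
    intervalIntegral.integral_hasDerivAt_right gauss_integrable.intervalIntegrable
      (hc.stronglyMeasurableAtFilter _ _) hc.continuousAt
  have h2 : HasDerivAt (fun x => gaussQ 0 -
      (1 / Real.sqrt (2 * Real.pi)) * ∫ t in (0:ℝ)..x, Real.exp (-t ^ 2 / 2))
      (0 - 1 / Real.sqrt (2 * Real.pi) * Real.exp (-(0:ℝ) ^ 2 / 2)) 0 :=
    (hasDerivAt_const _ _).sub (h.const_mul _)
  have : gaussQ = fun x => gaussQ 0 -
      (1 / Real.sqrt (2 * Real.pi)) * ∫ t in (0:ℝ)..x, Real.exp (-t ^ 2 / 2) := by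
    ext x; exact gaussQ_eq x
  rw [this]
  convert h2 using 1
  norm_num

/-- Value and derivative of the finite block-length error-probability function at
α = (e^R − 1)/P, justifying the tangent-line slope μ = √(LP²/(2π(e^{2R}−1))). -/

theorem stmt2 (L P R : ℝ) (hL : 0 < L) (hP : 0 < P) (hR : 0 < R)
    (α : ℝ) (hα : α = (Real.exp R - 1) / P)
    (W : ℝ → ℝ) (hW : W = fun x => gaussQ (Real.sqrt L * (Real.log (1 + x * P) - R) /
      Real.sqrt (1 - 1 / (1 + x * P) ^ 2))) :
    W α = 1 / 2 ∧
      HasDerivAt W (-Real.sqrt (L * P ^ 2 / (2 * Real.pi * (Real.exp (2 * R) - 1)))) α := by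
  subst hW
  set E := Real.exp R with hE
  have hEpos : 0 < E := Real.exp_pos R
  have hE1 : 1 < E := by
    have := Real.add_one_le_exp R; rw [← hE] at this; linarith
  have hu : 1 + α * P = E := by rw [hα]; field_simp; ring
  have hE2pos : (0:ℝ) < E ^ 2 - 1 := by nlinarith
  have hinnerpos : (0:ℝ) < 1 - ((1 + α * P) ^ 2)⁻¹ := by
    rw [hu, sub_pos]; exact inv_lt_one_of_one_lt₀ (by nlinarith)
  have hlogE : Real.log (1 + α * P) = R := by rw [hu, hE, Real.log_exp]
  -- value at α is 0
  have ha0 : Real.sqrt L * (Real.log (1 + α * P) - R) /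
      Real.sqrt (1 - 1 / (1 + α * P) ^ 2) = 0 := by
    rw [hlogE, sub_self, mul_zero, zero_div]
  constructor
  · simp only [ha0, gaussQ_zero]
  -- derivative
  simp only [one_div]
  have hA : HasDerivAt (fun x : ℝ => 1 + x * P) P α := by
    simpa using ((hasDerivAt_id α).mul_const P).const_add 1
  have hne0 : (1 + α * P) ≠ 0 := by rw [hu]; positivity
  have hlog := hA.log hne0
  have hn : HasDerivAt (fun x : ℝ => Real.sqrt L * (Real.log (1 + x * P) - R))
      (Real.sqrt L * (P / (1 + α * P))) α := (hlog.sub_const R).const_mul _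
  have hsq := hA.pow 2
  have hne2 : (1 + α * P) ^ 2 ≠ 0 := pow_ne_zero _ hne0
  have hinv := hsq.inv hne2
  have hone := hinv.const_sub 1
  have hne3 : 1 - ((1 + α * P) ^ 2)⁻¹ ≠ 0 := ne_of_gt hinnerpos
  have hd := hone.sqrt hne3
  have hne4 : Real.sqrt (1 - ((1 + α * P) ^ 2)⁻¹) ≠ 0 :=
    ne_of_gt (Real.sqrt_pos.2 hinnerpos)
  have hg := hn.div hd hne4
  have ha0' : Real.sqrt L * (Real.log (1 + α * P) - R) /
      Real.sqrt (1 - ((1 + α * P) ^ 2)⁻¹) = 0 := by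
    rw [hlogE, sub_self, mul_zero, zero_div]
  have hQ := gaussQ_hasDeriv
  rw [← ha0'] at hQ
  have hcomp := hQ.comp α hg
  refine hcomp.congr_deriv ?_
  symm
  simp only [Pi.inv_apply, Pi.pow_apply]
  -- now pure algebra
  rw [hlogE, sub_self, mul_zero, zero_mul, sub_zero, hu]
  have hs : Real.sqrt (1 - (E ^ 2)⁻¹) = Real.sqrt (E ^ 2 - 1) / E := by
    rw [show (1 - (E ^ 2)⁻¹) = (E ^ 2 - 1) / E ^ 2 by field_simp,
      Real.sqrt_div hE2pos.le, Real.sqrt_sq hEpos.le]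
  have hE2 : Real.exp (2 * R) = E ^ 2 := by
    rw [two_mul, Real.exp_add, ← hE]; ring
  have hrhs : Real.sqrt (L * P ^ 2 / (2 * π * (Real.exp (2 * R) - 1)))
      = Real.sqrt L * P / (Real.sqrt (2 * π) * Real.sqrt (E ^ 2 - 1)) := by
    rw [hE2, show L * P ^ 2 / (2 * π * (E ^ 2 - 1))
        = (Real.sqrt L * P / (Real.sqrt (2 * π) * Real.sqrt (E ^ 2 - 1))) ^ 2 by
      rw [div_pow, mul_pow, mul_pow, Real.sq_sqrt hL.le,
        Real.sq_sqrt (by positivity : (0:ℝ) ≤ 2 * π), Real.sq_sqrt hE2pos.le]]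
    exact Real.sqrt_sq (by positivity)
  rw [hrhs, hs]
  have hss : Real.sqrt (E ^ 2 - 1) ^ 2 = E ^ 2 - 1 := Real.sq_sqrt hE2pos.le
  rw [div_pow, hss]
  have hsqpi : Real.sqrt (2 * π) ≠ 0 := by positivity
  have hsE : Real.sqrt (E ^ 2 - 1) ≠ 0 := by positivity
  field_simp
  linear_combination hss
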